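/- Let Q be a sub-rate matrix and A : Set ι. Then for every x : ι, the function t ↦ ∑ y ∈ A, (Matrix.exp ℝ (t • Q_A)) x y is antitone on [0, ∞): for 0 ≤ u ≤ t, ∑ y ∈ A, (Matrix.exp ℝ (t • Q_A)) x y ≤ ∑ y ∈ A, (Matrix.exp ℝ (u • Q_A)) x y. (Finite-state core of the time-monotonicity in Theorem 2.5(iv) of the paper: the probability of not yet having left the truncation is nonincreasing in time.) -/

import Mathlib

/-- Mathlib's exponential, specialized to real matrices (`Matrix.exp ℝ`). -/
noncomputable def Matrix.exp (𝕂 : Type*) [Field 𝕂] {ι : Type*} [Fintype ι] [DecidableEq ι]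
    [Algebra 𝕂 ℝ] (A : Matrix ι ι ℝ) : Matrix ι ι ℝ :=
  NormedSpace.exp A

open Classical in
/-- The truncation `Q_A` of `Q` to `A`: every state outside `A` is made absorbing. -/
noncomputable def Matrix.truncation {ι : Type*} (Q : Matrix ι ι ℝ) (A : Set ι) :
    Matrix ι ι ℝ :=
  Matrix.of fun x y => if x ∈ A then Q x y else 0

section Aux

open NormedSpace
open scoped Nat

attribute [local instance] Matrix.linftyOpNormedRing Matrix.linftyOpNormedAlgebra

variable {ι : Type*} [Fintype ι] [DecidableEq ι]

private lemma exp_entry (X : Matrix ι ι ℝ) (x y : ι) :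
    NormedSpace.exp X x y = ∑' n : ℕ, (n !⁻¹ : ℝ) * ((X ^ n) x y) := by
  have hl : IsLinearMap ℝ (fun M : Matrix ι ι ℝ => M x y) := ⟨fun a b => rfl, fun c a => rfl⟩
  let f : Matrix ι ι ℝ →L[ℝ] ℝ := LinearMap.toContinuousLinearMap (hl.mk' _)
  have := (expSeries_summable' (𝕂 := ℝ) X).hasSum.mapL f
  rw [exp_eq_tsum ℝ]
  have h2 := this.tsum_eq.symm
  simp [f, smul_eq_mul] at h2
  exact h2

private lemma exp_entry_summable (X : Matrix ι ι ℝ) (x y : ι) :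
    Summable fun n : ℕ => (n !⁻¹ : ℝ) * ((X ^ n) x y) := by
  have hl : IsLinearMap ℝ (fun M : Matrix ι ι ℝ => M x y) := ⟨fun a b => rfl, fun c a => rfl⟩
  let f : Matrix ι ι ℝ →L[ℝ] ℝ := LinearMap.toContinuousLinearMap (hl.mk' _)
  have := ((expSeries_summable' (𝕂 := ℝ) X).hasSum.mapL f).summable
  simpa [f, smul_eq_mul] using this

private lemma pow_entry_nonneg {X : Matrix ι ι ℝ} (hX : ∀ x y, 0 ≤ X x y) :
    ∀ (n : ℕ) (x y : ι), 0 ≤ (X ^ n) x y := by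
  intro n
  induction n with
  | zero => intro x y; simp [Matrix.one_apply]; positivity
  | succ n ih =>
      intro x y
      rw [pow_succ, Matrix.mul_apply]
      exact Finset.sum_nonneg fun z _ => mul_nonneg (ih x z) (hX z y)

private lemma exp_entry_nonneg {X : Matrix ι ι ℝ} (hX : ∀ x y, 0 ≤ X x y) (x y : ι) :
    0 ≤ NormedSpace.exp X x y := by
  rw [exp_entry]
  refine tsum_nonneg fun n => mul_nonneg (by positivity) (pow_entry_nonneg hX n x y)

private lemma rowsum_pow_le {X : Matrix ι ι ℝ} (hX : ∀ x y, 0 ≤ X x y) {c : ℝ} (hc : 0 ≤ c)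
    (hrow : ∀ x, ∑ y, X x y ≤ c) : ∀ (n : ℕ) (x : ι), ∑ y, (X ^ n) x y ≤ c ^ n := by
  intro n
  induction n with
  | zero => intro x; simp [Matrix.one_apply]
  | succ n ih =>
      intro x
      have : ∑ y, (X ^ (n + 1)) x y = ∑ z, X x z * ∑ y, (X ^ n) z y := by
        simp_rw [pow_succ', Matrix.mul_apply, Finset.mul_sum]
        exact Finset.sum_comm
      rw [this, pow_succ']
      calc ∑ z, X x z * ∑ y, (X ^ n) z y ≤ ∑ z, X x z * c ^ n :=
            Finset.sum_le_sum fun z _ => mul_le_mul_of_nonneg_left (ih z) (hX x z)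
        _ = (∑ z, X x z) * c ^ n := by rw [Finset.sum_mul]
        _ ≤ c * c ^ n := mul_le_mul_of_nonneg_right (hrow x) (by positivity)

private lemma exp_rowsum_le {X : Matrix ι ι ℝ} (hX : ∀ x y, 0 ≤ X x y) {c : ℝ} (hc : 0 ≤ c)
    (hrow : ∀ x, ∑ y, X x y ≤ c) (x : ι) : ∑ y, NormedSpace.exp X x y ≤ Real.exp c := by
  have hsum : ∑ y, NormedSpace.exp X x y
      = ∑' n : ℕ, (n !⁻¹ : ℝ) * ∑ y, (X ^ n) x y := by
    simp_rw [exp_entry, Finset.mul_sum]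
    exact (Summable.tsum_finsetSum fun y _ => exp_entry_summable X x y).symm
  have hre : Real.exp c = ∑' n : ℕ, (n !⁻¹ : ℝ) * c ^ n := by
    rw [Real.exp_eq_exp_ℝ, exp_eq_tsum ℝ]
    simp [smul_eq_mul]
  rw [hsum, hre]
  refine Summable.tsum_le_tsum (fun n => ?_) ?_ ?_
  · exact mul_le_mul_of_nonneg_left (rowsum_pow_le hX hc hrow n x) (by positivity)
  · have : Summable fun n : ℕ => ∑ y, (n !⁻¹ : ℝ) * (X ^ n) x y :=
      summable_sum fun y _ => exp_entry_summable X x y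
    simpa [Finset.mul_sum] using this
  · simpa [smul_eq_mul] using expSeries_summable' (𝕂 := ℝ) (c : ℝ)

private lemma exp_smul_one (r : ℝ) :
    NormedSpace.exp (r • (1 : Matrix ι ι ℝ)) = Real.exp r • (1 : Matrix ι ι ℝ) := by
  have hc : Continuous (algebraMap ℝ (Matrix ι ι ℝ)) := by
    simp only [Algebra.algebraMap_eq_smul_one']
    exact continuous_id.smul continuous_const
  have := map_exp (Algebra.ofId ℝ (Matrix ι ι ℝ)) hc r
  simp only [Algebra.ofId_apply, Algebra.algebraMap_eq_smul_one] at this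
  rw [Real.exp_eq_exp_ℝ]; exact this.symm

/-- nonnegativity and row mass bound for `exp` of a sub-rate matrix. -/
private lemma exp_subrate {M : Matrix ι ι ℝ} (hM : ∀ x y, x ≠ y → 0 ≤ M x y)
    (hrow : ∀ x, ∑ y, M x y ≤ 0) {s : ℝ} (hs : 0 ≤ s) :
    (∀ x y, 0 ≤ NormedSpace.exp (s • M) x y) ∧
      (∀ x, ∑ y, NormedSpace.exp (s • M) x y ≤ 1) := by
  set c : ℝ := ∑ x, |M x x| with hc
  have hc0 : 0 ≤ c := Finset.sum_nonneg fun x _ => abs_nonneg _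
  have hcx : ∀ x, -M x x ≤ c := fun x =>
    le_trans (neg_le_abs _) (Finset.single_le_sum (fun i _ => abs_nonneg (M i i))
      (Finset.mem_univ x))
  set P : Matrix ι ι ℝ := s • M + (s * c) • (1 : Matrix ι ι ℝ) with hP
  have hPnn : ∀ x y, 0 ≤ P x y := by
    intro x y
    rcases eq_or_ne x y with rfl | hxy
    · have h1 : P x x = s * (M x x + c) := by
        simp [hP, Matrix.one_apply_eq]; ring
      rw [h1]; exact mul_nonneg hs (by linarith [hcx x])
    · have h1 : P x y = s * M x y := by
        simp [hP, Matrix.one_apply_ne hxy]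
      rw [h1]; exact mul_nonneg hs (hM x y hxy)
  have hProw : ∀ x, ∑ y, P x y ≤ s * c := by
    intro x
    simp only [hP, Matrix.add_apply, Matrix.smul_apply, Matrix.one_apply, smul_eq_mul,
      Finset.sum_add_distrib, ← Finset.mul_sum, Finset.sum_ite_eq, Finset.mem_univ, if_pos,
      mul_ite, mul_one, mul_zero]
    have := mul_nonpos_of_nonneg_of_nonpos hs (hrow x)
    linarith
  have hsM : s • M = P + (-(s * c)) • (1 : Matrix ι ι ℝ) := by
    simp [hP, add_assoc, ← add_smul]
  have hcomm : Commute P ((-(s * c)) • (1 : Matrix ι ι ℝ)) :=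
    ((Commute.one_right P).smul_right _)
  have hexp : NormedSpace.exp (s • M)
      = Real.exp (-(s * c)) • NormedSpace.exp P := by
    rw [hsM]; erw [exp_add_of_commute hcomm, exp_smul_one]; rw [ Matrix.mul_smul, mul_one]; rfl
  constructor
  · intro x y
    rw [hexp]
    simp only [Matrix.smul_apply, smul_eq_mul]
    exact mul_nonneg (Real.exp_nonneg _) (exp_entry_nonneg hPnn x y)
  · intro x
    rw [hexp]
    simp only [Matrix.smul_apply, smul_eq_mul, ← Finset.mul_sum]
    calc Real.exp (-(s * c)) * ∑ y, NormedSpace.exp P x y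
        ≤ Real.exp (-(s * c)) * Real.exp (s * c) :=
          mul_le_mul_of_nonneg_left
            (exp_rowsum_le hPnn (mul_nonneg hs hc0) hProw x) (Real.exp_nonneg _)
      _ = 1 := by rw [← Real.exp_add]; simp

private lemma exp_split (M : Matrix ι ι ℝ) (u v : ℝ) :
    NormedSpace.exp ((u + v) • M) = NormedSpace.exp (u • M) * NormedSpace.exp (v • M) := by
  rw [add_smul]; exact NormedSpace.exp_add_of_commute (((Commute.refl M).smul_left u).smul_right v)

private lemma exp_absorbing {M : Matrix ι ι ℝ} {z : ι} (hz : ∀ y, M z y = 0) (y : ι) :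
    NormedSpace.exp M z y = (1 : Matrix ι ι ℝ) z y := by
  rw [exp_entry]
  rw [tsum_eq_single 0 ?_]
  · simp
  · intro n hn
    obtain ⟨m, rfl⟩ := Nat.exists_eq_succ_of_ne_zero hn
    rw [pow_succ', Matrix.mul_apply]
    simp [hz]

end Aux

/-- For a sub-rate matrix `Q` and a truncation `A`, the probability of not yet having left
the truncation, `t ↦ ∑ y ∈ A, exp (t • Q_A) x y`, is antitone on `[0, ∞)`. -/
theorem matrix_exp_truncation_mass_antitone {ι : Type*} [Fintype ι] [DecidableEq ι] [Nonempty ι]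
    (Q : Matrix ι ι ℝ) (hMetzler : ∀ x y, x ≠ y → Q x y ≥ 0)
    (hrow : ∀ x, ∑ y, Q x y ≤ 0) (A : Set ι) :
    ∀ x : ι, ∀ u t : ℝ, 0 ≤ u → u ≤ t →
      ∑ᶠ y ∈ A, Matrix.exp ℝ (t • Q.truncation A) x y ≤
        ∑ᶠ y ∈ A, Matrix.exp ℝ (u • Q.truncation A) x y := by
  classical
  intro x u t hu hut
  set M : Matrix ι ι ℝ := Q.truncation A with hMdef
  have hmem : ∀ {a : ι}, a ∈ A → ∀ y, M a y = Q a y := fun {a} ha y => if_pos ha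
  have hnot : ∀ {a : ι}, a ∉ A → ∀ y, M a y = 0 := fun {a} ha y => if_neg ha
  have hM : ∀ a b, a ≠ b → 0 ≤ M a b := by
    intro a b hab
    by_cases ha : a ∈ A
    · rw [hmem ha]; exact hMetzler a b hab
    · rw [hnot ha]
  have hMrow : ∀ a, ∑ y, M a y ≤ 0 := by
    intro a
    by_cases ha : a ∈ A
    · simp only [hmem ha]; exact hrow a
    · simp [hnot ha]
  set F : Finset ι := A.toFinset with hF
  have hFmem : ∀ a, a ∈ F ↔ a ∈ A := fun a => Set.mem_toFinset
  have hfin : ∀ (s : ℝ),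
      ∑ᶠ y ∈ A, Matrix.exp ℝ (s • M) x y = ∑ y ∈ F, Matrix.exp ℝ (s • M) x y := by
    intro s
    rw [← Set.coe_toFinset A, finsum_mem_coe_finset]
  rw [hfin, hfin]
  set E : Matrix ι ι ℝ := Matrix.exp ℝ (u • M) with hE
  set S : Matrix ι ι ℝ := Matrix.exp ℝ ((t - u) • M) with hS
  obtain ⟨hEnn, hErow⟩ := exp_subrate hM hMrow hu
  obtain ⟨hSnn, hSrow⟩ := exp_subrate hM hMrow (sub_nonneg.2 hut)
  have hsplit : Matrix.exp ℝ (t • M) = E * S := by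
    have h := exp_split M u (t - u)
    rw [show u + (t - u) = t by ring] at h
    exact h
  have step1 : ∑ y ∈ F, Matrix.exp ℝ (t • M) x y
      = ∑ z, E x z * ∑ y ∈ F, S z y := by
    simp_rw [hsplit, Matrix.mul_apply, Finset.mul_sum]
    exact Finset.sum_comm
  have hSzero : ∀ z, z ∉ A → ∑ y ∈ F, S z y = 0 := by
    intro z hz
    have habs : ∀ y, ((t - u) • M) z y = 0 := by
      intro y; simp [Matrix.smul_apply, hnot hz]
    have : ∀ y, S z y = (1 : Matrix ι ι ℝ) z y := fun y => exp_absorbing habs y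
    simp only [this, Matrix.one_apply]
    rw [Finset.sum_ite_eq F z (fun _ => (1:ℝ))]
    simp [hFmem, hz]
  have step2 : ∑ z, E x z * ∑ y ∈ F, S z y = ∑ z ∈ F, E x z * ∑ y ∈ F, S z y := by
    refine (Finset.sum_subset F.subset_univ ?_).symm
    intro z _ hzF
    rw [hSzero z (fun h => hzF ((hFmem z).2 h)), mul_zero]
  rw [step1, step2]
  refine Finset.sum_le_sum fun z _ => ?_
  have h1 : ∑ y ∈ F, S z y ≤ 1 := by
    calc ∑ y ∈ F, S z y ≤ ∑ y, S z y :=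
          Finset.sum_le_sum_of_subset_of_nonneg F.subset_univ fun y _ _ => hSnn z y
      _ ≤ 1 := hSrow z
  have h2 : 0 ≤ ∑ y ∈ F, S z y := Finset.sum_nonneg fun y _ => hSnn z y
  calc E x z * ∑ y ∈ F, S z y ≤ E x z * 1 :=
        mul_le_mul_of_nonneg_left h1 (hEnn x z)
    _ = E x z := mul_one _
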